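/- Let −1 < α < 0, let f* : ℝ → ℂ be continuous, 2π-periodic with |f*(t)| ≤ 1 for all t, and let f = P_α[f*]. Then for every z ∈ 𝔻, |f(z) − ((1−|z|²)^{α+1}/(1+|z|²))·f(0)| ≤ (4/π)·(1−|z|)^α·arctan|z| + ((1−|z|)^α − 1). -/

import Mathlib

open Complex MeasureTheory Real Set

noncomputable section

/-- Wirtinger derivative `∂f = (f_x - i f_y)/2` of a function `f : ℂ → ℂ`,
viewed as a real-differentiable map. -/
def wdz (f : ℂ → ℂ) (z : ℂ) : ℂ :=
  (fderiv ℝ f z 1 - Complex.I * fderiv ℝ f z Complex.I) / 2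

/-- Wirtinger derivative `∂̄f = (f_x + i f_y)/2`. -/
def wdzbar (f : ℂ → ℂ) (z : ℂ) : ℂ :=
  (fderiv ℝ f z 1 + Complex.I * fderiv ℝ f z Complex.I) / 2

/-- The `α`-harmonic Poisson kernel
`P_α(z) = (1-|z|²)^{α+1} / ((1-z)(1-z̄)^{α+1})` (principal powers). -/
def poissonKernelAlpha (α : ℝ) (z : ℂ) : ℂ :=
  (((1 - ‖z‖ ^ 2) ^ (α + 1) : ℝ) : ℂ) /
    ((1 - z) * (1 - (starRingEnd ℂ) z) ^ ((α : ℂ) + 1))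

/-- The `α`-harmonic extension `P_α[F](z) = (1/2π) ∫₀^{2π} P_α(z e^{-it}) F(t) dt`. -/
def poissonExt (α : ℝ) (F : ℝ → ℂ) (z : ℂ) : ℂ :=
  (1 / (2 * Real.pi) : ℂ) *
    ∫ t in (0:ℝ)..(2 * Real.pi), poissonKernelAlpha α (z * Complex.exp (-Complex.I * t)) * F t

/-- The angular derivative `∂_θ f(z) = i (z ∂f(z) - z̄ ∂̄f(z))`. -/
def angularDeriv (f : ℂ → ℂ) (z : ℂ) : ℂ :=
  Complex.I * (z * wdz f z - (starRingEnd ℂ) z * wdzbar f z)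

/-- The integral mean `M_p(r,g) = ((1/2π) ∫₀^{2π} |g(r e^{iθ})|^p dθ)^{1/p}`. -/
def Mp (p : ℝ) (r : ℝ) (g : ℂ → ℂ) : ℝ :=
  ((1 / (2 * Real.pi)) *
      ∫ θ in (0:ℝ)..(2 * Real.pi),
        ‖(g ((r : ℂ) * Complex.exp (Complex.I * θ)))‖ ^ p) ^ (1 / p)

/-- The boundary `L^p` norm `‖G‖_{L^p} = ((1/2π) ∫₀^{2π} |G(t)|^p dt)^{1/p}`. -/
def lpNormBdry (p : ℝ) (G : ℝ → ℂ) : ℝ :=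
  ((1 / (2 * Real.pi)) * ∫ t in (0:ℝ)..(2 * Real.pi), ‖(G t)‖ ^ p) ^ (1 / p)

/-- The constant `c_α = Γ(α+1)/Γ(α/2+1)²`. -/
def cAlpha (α : ℝ) : ℝ := Real.Gamma (α + 1) / (Real.Gamma (α / 2 + 1)) ^ 2

/-- `I_α(r) = (1/2π) ∫₀^{2π} (1-r²)^α / |1 - r e^{it}|^{α+1} dt`. -/
def Ialpha (α r : ℝ) : ℝ :=
  (1 / (2 * Real.pi)) *
    ∫ t in (0:ℝ)..(2 * Real.pi),
      (1 - r ^ 2) ^ α / (‖(1 - (r : ℂ) * Complex.exp (Complex.I * t))‖) ^ (α + 1)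

/-- `g_α(z) = ((1-|z|²)/(1-z̄))^α` (principal complex power). -/
def gAlpha (α : ℝ) (z : ℂ) : ℂ :=
  ((((1 - ‖z‖ ^ 2 : ℝ)) : ℂ) / (1 - (starRingEnd ℂ) z)) ^ (α : ℂ)

end

section SchwarzAux
lemma abs_cpow_sub_one_le {u : ℂ} {β r : ℝ} (hβ0 : 0 ≤ β) (hβ1 : β ≤ 1)
    (hu : ‖u‖ ≤ r) (hr1 : r < 1) :
    ‖((1 + u) ^ (β:ℂ) - 1)‖ ≤ 1 - (1 - r) ^ β := by
  have hr0 : 0 ≤ r := le_trans (norm_nonneg u) hu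
  have habs : ∀ s : ℝ, s ∈ Set.Icc (0:ℝ) 1 → ‖((s:ℂ)*u)‖ ≤ s * r := by
    intro s hs
    rw [norm_mul, Complex.norm_real, Real.norm_eq_abs, _root_.abs_of_nonneg hs.1]
    exact mul_le_mul_of_nonneg_left hu hs.1
  have hre : ∀ s : ℝ, s ∈ Set.Icc (0:ℝ) 1 → 0 < ((1:ℂ) + (s:ℂ) * u).re := by
    intro s hs
    have h1 : |((s:ℂ) * u).re| ≤ ‖((s:ℂ)*u)‖ := Complex.abs_re_le_norm _
    have h4 : ‖((s:ℂ)*u)‖ ≤ r := by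
      refine (habs s hs).trans ?_
      nlinarith [hs.1, hs.2]
    have : -r ≤ ((s:ℂ)*u).re := by
      have := (abs_le.mp (le_trans h1 h4)).1; linarith
    simp only [Complex.add_re, Complex.one_re]
    linarith
  have hlow : ∀ s : ℝ, s ∈ Set.Icc (0:ℝ) 1 → 1 - s*r ≤ ‖((1:ℂ) + (s:ℂ)*u)‖ := by
    intro s hs
    have h1 : (1:ℝ) ≤ ‖((1:ℂ) + (s:ℂ)*u)‖ + ‖((s:ℂ)*u)‖ := by
      have := norm_add_le ((1:ℂ) + (s:ℂ)*u) (-((s:ℂ)*u))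
      simpa using this
    have := habs s hs
    linarith
  have hd : ∀ s ∈ Set.uIcc (0:ℝ) 1,
      HasDerivAt (fun s : ℝ => ((1:ℂ) + (s:ℂ) * u) ^ (β:ℂ))
        ((β:ℂ) * ((1:ℂ) + (s:ℂ) * u) ^ ((β:ℂ) - 1) * u) s := by
    intro s hs
    rw [Set.uIcc_of_le (by norm_num : (0:ℝ) ≤ 1)] at hs
    have hin : HasDerivAt (fun s : ℝ => (1:ℂ) + (s:ℂ) * u) u s := by
      have : HasDerivAt (fun s : ℝ => ((s:ℝ):ℂ)) 1 s := Complex.ofRealCLM.hasDerivAt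
      simpa using (this.mul_const u).const_add 1
    have hout := (Complex.hasStrictDerivAt_cpow_const
        (c := (β:ℂ)) (Or.inl (hre s hs))).hasDerivAt
    exact hout.comp s hin
  -- continuity of the derivative, for interval integrability
  have hcont : ContinuousOn
      (fun s : ℝ => (β:ℂ) * ((1:ℂ) + (s:ℂ) * u) ^ ((β:ℂ) - 1) * u)
      (Set.uIcc (0:ℝ) 1) := by
    rw [Set.uIcc_of_le (by norm_num : (0:ℝ) ≤ 1)]
    intro s hs
    apply ContinuousWithinAt.mul _ continuousWithinAt_const
    apply ContinuousWithinAt.mul continuousWithinAt_const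
    have hbase : ContinuousAt (fun s : ℝ => (1:ℂ) + (s:ℂ)*u) s := by fun_prop
    have hthis : ContinuousAt (fun z : ℂ => z ^ ((β:ℂ)-1)) ((1:ℂ) + (s:ℂ)*u) :=
      continuousAt_cpow_const (Or.inl (hre s hs))
    exact (ContinuousAt.comp (x := s) (g := fun z : ℂ => z ^ ((β:ℂ)-1))
      (f := fun s : ℝ => (1:ℂ) + (s:ℂ)*u) hthis hbase).continuousWithinAt
  have hFTC := intervalIntegral.integral_eq_sub_of_hasDerivAt hd
      (hcont.intervalIntegrable)
  have hval : ((1:ℂ) + u) ^ (β:ℂ) - 1 =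
      ∫ s in (0:ℝ)..1, (β:ℂ) * ((1:ℂ) + (s:ℂ) * u) ^ ((β:ℂ) - 1) * u := by
    rw [hFTC]; norm_num
  rcases eq_or_lt_of_le hr0 with hr0' | hrpos
  · -- r = 0 forces u = 0
    have hu0 : u = 0 := by
      have : ‖u‖ ≤ 0 := by rw [hr0']; exact hu
      simpa using le_antisymm this (norm_nonneg u)
    simp only [hu0, add_zero, Complex.one_cpow, sub_self, norm_zero, ← hr0']
    norm_num
  -- main case 0 < r
  have hbound : ∀ s ∈ Set.uIoc (0:ℝ) 1,
      ‖(β:ℂ) * ((1:ℂ) + (s:ℂ) * u) ^ ((β:ℂ) - 1) * u‖ ≤ β * (1 - s*r) ^ (β-1) * r := by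
    intro s hs
    rw [Set.uIoc_of_le (by norm_num : (0:ℝ) ≤ 1)] at hs
    have hs' : s ∈ Set.Icc (0:ℝ) 1 := ⟨le_of_lt hs.1, hs.2⟩
    have hpos : 0 < 1 - s*r := by nlinarith [hs'.1, hs'.2]
    have h1 : ‖(((1:ℂ) + (s:ℂ) * u) ^ ((β:ℂ) - 1))‖
        = ‖((1:ℂ) + (s:ℂ) * u)‖ ^ (β-1) := by
      have : ((β:ℂ) - 1) = ((β - 1 : ℝ) : ℂ) := by push_cast; ring
      rw [this, Complex.norm_cpow_real]
    have h2 : ‖((1:ℂ) + (s:ℂ) * u)‖ ^ (β-1) ≤ (1 - s*r) ^ (β-1) :=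
      Real.rpow_le_rpow_of_nonpos hpos (hlow s hs') (by linarith)
    rw [norm_mul, norm_mul]
    simp only [Complex.norm_real, Real.norm_eq_abs]
    rw [_root_.abs_of_nonneg hβ0]
    rw [h1]
    apply mul_le_mul _ hu (norm_nonneg u)
    · positivity
    · exact mul_le_mul_of_nonneg_left h2 hβ0
  have hgint : IntervalIntegrable (fun s : ℝ => β * (1 - s*r) ^ (β-1) * r)
      MeasureTheory.volume 0 1 := by
    apply ContinuousOn.intervalIntegrable
    rw [Set.uIcc_of_le (by norm_num : (0:ℝ) ≤ 1)]
    intro s hs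
    have hpos : (0:ℝ) < 1 - s*r := by nlinarith [hs.1, hs.2]
    apply ContinuousWithinAt.mul _ continuousWithinAt_const
    apply ContinuousWithinAt.mul continuousWithinAt_const
    have hthis : ContinuousAt (fun x : ℝ => x ^ (β-1)) (1 - s*r) :=
      Real.continuousAt_rpow_const _ _ (Or.inl (ne_of_gt hpos))
    exact (ContinuousAt.comp (x := s) (g := fun x : ℝ => x ^ (β-1))
      (f := fun s : ℝ => 1 - s*r) hthis (by fun_prop)).continuousWithinAt
  have hnorm := intervalIntegral.norm_integral_le_abs_of_norm_le
      (f := fun s : ℝ => (β:ℂ) * ((1:ℂ) + (s:ℂ) * u) ^ ((β:ℂ) - 1) * u)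
      (g := fun s : ℝ => β * (1 - s*r) ^ (β-1) * r)
      (by
        filter_upwards [MeasureTheory.ae_restrict_mem measurableSet_Ioc] with s hs
        exact hbound s hs)
      hgint
  -- compute ∫ of the bound
  have hF : ∀ s ∈ Set.uIcc (0:ℝ) 1,
      HasDerivAt (fun s : ℝ => -(1 - s*r) ^ β) (β * (1 - s*r) ^ (β-1) * r) s := by
    intro s hs
    rw [Set.uIcc_of_le (by norm_num : (0:ℝ) ≤ 1)] at hs
    have hpos : (0:ℝ) < 1 - s*r := by nlinarith [hs.1, hs.2]
    have hin : HasDerivAt (fun s : ℝ => 1 - s*r) (-r) s := by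
      simpa using ((hasDerivAt_id s).mul_const r).const_sub 1
    have hout := Real.hasDerivAt_rpow_const (x := 1 - s*r) (p := β) (Or.inl (ne_of_gt hpos))
    have := (hout.comp s hin).neg
    refine this.congr_deriv ?_
    ring
  have hcalc : (∫ s in (0:ℝ)..1, β * (1 - s*r) ^ (β-1) * r) = 1 - (1-r)^β := by
    rw [intervalIntegral.integral_eq_sub_of_hasDerivAt hF hgint]
    norm_num
    ring
  rw [hval]
  refine hnorm.trans ?_
  rw [hcalc, _root_.abs_of_nonneg]
  have : (1-r)^β ≤ 1 := Real.rpow_le_one (by linarith) (by linarith) hβ0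
  linarith

lemma alg_bound {r α : ℝ} (hr0 : 0 ≤ r) (hr1 : r < 1) (hα1 : -1 ≤ α) (hα2 : α ≤ 0) :
    (1-r^2)/(1+r^2) * (1-r^2)^α * (1 - (1-r)^(-α)) ≤ (1-r)^α - 1 := by
  have h1r : (0:ℝ) < 1 - r := by linarith
  have h1r2 : (0:ℝ) < 1 - r^2 := by nlinarith
  have h1pr2 : (0:ℝ) < 1 + r^2 := by positivity
  have hfac : (0:ℝ) ≤ 1 - (1-r)^(-α) := by
    have : (1-r)^(-α) ≤ 1 := Real.rpow_le_one (le_of_lt h1r) (by linarith) (by linarith)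
    linarith
  have hkey : (1-r^2)/(1+r^2) * (1-r^2)^α ≤ (1-r)^α := by
    have hsplit : (1-r^2)^α = (1-r)^α * (1+r)^α := by
      rw [show (1-r^2 : ℝ) = (1-r)*(1+r) by ring, Real.mul_rpow (le_of_lt h1r) (by linarith)]
    have h1 : (1+r)^α ≤ 1 := Real.rpow_le_one_of_one_le_of_nonpos (by linarith) hα2
    have h2 : (1-r^2)/(1+r^2) ≤ 1 := by
      rw [div_le_one h1pr2]; nlinarith
    have hpos1 : (0:ℝ) ≤ (1-r)^α := le_of_lt (Real.rpow_pos_of_pos h1r α)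
    have hpos2 : (0:ℝ) ≤ (1+r)^α := le_of_lt (Real.rpow_pos_of_pos (by linarith) α)
    calc (1-r^2)/(1+r^2) * (1-r^2)^α = ((1-r^2)/(1+r^2) * (1+r)^α) * (1-r)^α := by
          rw [hsplit]; ring
      _ ≤ (1 * 1) * (1-r)^α := by
          apply mul_le_mul_of_nonneg_right _ hpos1
          apply mul_le_mul h2 h1 hpos2 zero_le_one
      _ = (1-r)^α := by ring
  have hrhs : (1-r)^α - 1 = (1-r)^α * (1 - (1-r)^(-α)) := by
    have : (1-r)^α * (1-r)^(-α) = 1 := by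
      rw [← Real.rpow_add h1r]; simp
    rw [mul_sub, this, mul_one]
  rw [hrhs]
  exact mul_le_mul_of_nonneg_right hkey hfac

lemma denom_pos {ρ : ℝ} (hρ : |ρ| < 1) (t : ℝ) : 0 < 1 - 2*ρ*Real.cos t + ρ^2 := by
  have h1 : ρ * Real.cos t ≤ |ρ| := by
    calc ρ * Real.cos t ≤ |ρ * Real.cos t| := le_abs_self _
      _ = |ρ| * |Real.cos t| := abs_mul _ _
      _ ≤ |ρ| * 1 := mul_le_mul_of_nonneg_left (Real.abs_cos_le_one t) (abs_nonneg ρ)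
      _ = |ρ| := mul_one _
  have h2 : (0:ℝ) < (1 - |ρ|)^2 := by
    apply pow_pos; linarith
  have h3 : ρ^2 = |ρ|^2 := (_root_.sq_abs ρ).symm
  nlinarith [h1, h2, h3]

lemma hasDeriv_F {ρ : ℝ} (hρ : |ρ| < 1) {t : ℝ} (ht : Real.cos (t/2) ≠ 0) :
    HasDerivAt (fun t => 2 * Real.arctan ((1+ρ)/(1-ρ) * Real.tan (t/2)))
      ((1-ρ^2)/(1-2*ρ*Real.cos t+ρ^2)) t := by
  rcases abs_lt.mp hρ with ⟨hρ1, hρ2⟩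
  set k := (1+ρ)/(1-ρ) with hk
  have hkpos : 0 < k := div_pos (by linarith) (by linarith)
  have h1 : HasDerivAt (fun t : ℝ => t/2) (1/2) t := by
    simpa using (hasDerivAt_id t).div_const 2
  have h2 : HasDerivAt (fun t : ℝ => Real.tan (t/2)) ((1/Real.cos (t/2)^2) * (1/2)) t :=
    by have := (Real.hasDerivAt_tan ht).comp t h1; exact this
  have h3 := h2.const_mul k
  have h4 := (Real.hasDerivAt_arctan (k * Real.tan (t/2))).comp t h3
  have h5 := h4.const_mul 2
  refine h5.congr_deriv ?_
  symm
  set c := Real.cos (t/2) with hc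
  have hct : Real.cos t = 2*c^2 - 1 := by
    have h := Real.cos_sq (t/2)
    rw [show 2*(t/2) = t by ring] at h
    linarith
  have hc2pos : 0 < c^2 := lt_of_le_of_ne (sq_nonneg c) (Ne.symm (pow_ne_zero 2 ht))
  have hc2le : c^2 ≤ 1 := by
    nlinarith [Real.sin_sq_add_cos_sq (t/2), sq_nonneg (Real.sin (t/2))]
  have hs2 : Real.sin (t/2)^2 = 1 - c^2 := by
    have := Real.sin_sq_add_cos_sq (t/2); linarith
  have htansq : Real.tan (t/2)^2 = (1-c^2)/c^2 := by
    rw [Real.tan_eq_sin_div_cos, div_pow, hs2]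
  have hden2 : 0 < c^2 + k^2 * (1 - c^2) := by
    nlinarith [mul_nonneg (sq_nonneg k) (sub_nonneg.mpr hc2le)]
  have hdpos := denom_pos hρ t
  have hR : 2 * (1 / (1 + (k * Real.tan (t/2))^2) * (k * (1/c^2 * (1/2))))
      = k / (c^2 + k^2*(1-c^2)) := by
    rw [mul_pow, htansq]
    rw [eq_div_iff hden2.ne']
    field_simp
  rw [hR]
  rw [hct] at hdpos ⊢
  rw [div_eq_div_iff hdpos.ne' hden2.ne', hk]
  have h1ρ : (1:ℝ) - ρ ≠ 0 := by linarith
  field_simp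
  ring

lemma cos_half_ne {t : ℝ} (ht : t ∈ Set.Icc (-(π/2)) (π/2)) : Real.cos (t/2) ≠ 0 := by
  have hpi := Real.pi_pos
  apply ne_of_gt
  apply Real.cos_pos_of_mem_Ioo
  constructor
  · cases' ht with h1 h2; linarith
  · cases' ht with h1 h2; linarith

lemma int_kernel {ρ : ℝ} (hρ : |ρ| < 1) {a b : ℝ}
    (ha : a ∈ Set.Icc (-(π/2)) (π/2)) (hb : b ∈ Set.Icc (-(π/2)) (π/2)) :
    ∫ t in a..b, (1-ρ^2)/(1-2*ρ*Real.cos t+ρ^2)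
      = 2*Real.arctan ((1+ρ)/(1-ρ) * Real.tan (b/2))
        - 2*Real.arctan ((1+ρ)/(1-ρ) * Real.tan (a/2)) := by
  apply intervalIntegral.integral_eq_sub_of_hasDerivAt
  · intro t ht
    have htIcc : t ∈ Set.Icc (-(π/2)) (π/2) := by
      have hle : -(π/2) ≤ π/2 := by linarith [Real.pi_pos]
      have h1 : Set.uIcc a b ⊆ Set.uIcc (-(π/2)) (π/2) :=
        Set.uIcc_subset_uIcc (by rwa [Set.uIcc_of_le hle]) (by rwa [Set.uIcc_of_le hle])
      have := h1 ht
      rwa [Set.uIcc_of_le hle] at this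
    exact hasDeriv_F hρ (cos_half_ne htIcc)
  · apply Continuous.intervalIntegrable
    apply Continuous.div continuous_const (by continuity)
    intro t
    exact (denom_pos hρ t).ne'

lemma arctan_add_pi_div_four {r : ℝ} (hr0 : 0 ≤ r) (hr1 : r < 1) :
    Real.arctan ((1+r)/(1-r)) = π/4 + Real.arctan r := by
  have hpi := Real.pi_pos
  set a := Real.arctan r with ha
  have haIoo : a ∈ Set.Ioo (-(π/2)) (π/2) := Real.arctan_mem_Ioo r
  have ha0 : 0 ≤ a := by
    rw [ha, ← Real.arctan_zero]
    exact Real.arctan_strictMono.monotone hr0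
  have ha4 : a < π/4 := by
    have := Real.arctan_strictMono hr1
    rwa [Real.arctan_one] at this
  have hca : 0 < Real.cos a := Real.cos_pos_of_mem_Ioo haIoo
  have hta : Real.sin a = r * Real.cos a := by
    have h := Real.tan_arctan r
    rw [Real.tan_eq_sin_div_cos] at h
    field_simp at h
    linarith [h]
  have htan : Real.tan (π/4 + a) = (1+r)/(1-r) := by
    rw [Real.tan_eq_sin_div_cos, Real.sin_add, Real.cos_add,
      Real.sin_pi_div_four, Real.cos_pi_div_four, hta]
    have hc : Real.sqrt 2 / 2 * Real.cos a ≠ 0 := by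
      have : (0:ℝ) < Real.sqrt 2 := Real.sqrt_pos.mpr (by norm_num)
      positivity
    calc (Real.sqrt 2/2 * Real.cos a + Real.sqrt 2/2 * (r*Real.cos a))
          / (Real.sqrt 2/2 * Real.cos a - Real.sqrt 2/2 * (r*Real.cos a))
        = ((1+r) * (Real.sqrt 2/2 * Real.cos a)) / ((1-r) * (Real.sqrt 2/2 * Real.cos a)) := by
          ring_nf
      _ = (1+r)/(1-r) := mul_div_mul_right _ _ hc
  rw [← htan, Real.arctan_tan (by linarith) (by linarith)]

lemma arctan_sub_pi_div_four {r : ℝ} (hr0 : 0 ≤ r) (hr1 : r < 1) :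
    Real.arctan ((1-r)/(1+r)) = π/4 - Real.arctan r := by
  have hpi := Real.pi_pos
  set a := Real.arctan r with ha
  have haIoo : a ∈ Set.Ioo (-(π/2)) (π/2) := Real.arctan_mem_Ioo r
  have ha0 : 0 ≤ a := by
    rw [ha, ← Real.arctan_zero]
    exact Real.arctan_strictMono.monotone hr0
  have ha4 : a < π/4 := by
    have := Real.arctan_strictMono hr1
    rwa [Real.arctan_one] at this
  have hca : 0 < Real.cos a := Real.cos_pos_of_mem_Ioo haIoo
  have hta : Real.sin a = r * Real.cos a := by
    have h := Real.tan_arctan r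
    rw [Real.tan_eq_sin_div_cos] at h
    field_simp at h
    linarith [h]
  have htan : Real.tan (π/4 - a) = (1-r)/(1+r) := by
    rw [Real.tan_eq_sin_div_cos, Real.sin_sub, Real.cos_sub,
      Real.sin_pi_div_four, Real.cos_pi_div_four, hta]
    have hc : Real.sqrt 2 / 2 * Real.cos a ≠ 0 := by
      have : (0:ℝ) < Real.sqrt 2 := Real.sqrt_pos.mpr (by norm_num)
      positivity
    calc (Real.sqrt 2/2 * Real.cos a - Real.sqrt 2/2 * (r*Real.cos a))
          / (Real.sqrt 2/2 * Real.cos a + Real.sqrt 2/2 * (r*Real.cos a))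
        = ((1-r) * (Real.sqrt 2/2 * Real.cos a)) / ((1+r) * (Real.sqrt 2/2 * Real.cos a)) := by
          ring_nf
      _ = (1-r)/(1+r) := mul_div_mul_right _ _ hc
  rw [← htan, Real.arctan_tan (by linarith) (by linarith)]

lemma hethcote {r : ℝ} (hr0 : 0 ≤ r) (hr1 : r < 1) :
    ∫ t in (0:ℝ)..(2*π), |(1-r^2)/(1-2*r*Real.cos t+r^2) - (1-r^2)/(1+r^2)|
      = 8 * Real.arctan r := by
  have hpi := Real.pi_pos
  have habs : |r| < 1 := by rwa [_root_.abs_of_nonneg hr0]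
  have habs' : |(-r)| < 1 := by rwa [abs_neg, _root_.abs_of_nonneg hr0]
  set c₀ : ℝ := (1-r^2)/(1+r^2) with hc₀
  set Q : ℝ → ℝ := fun t => (1-r^2)/(1-2*r*Real.cos t+r^2) with hQ
  set g : ℝ → ℝ := fun t => |Q t - c₀| with hg
  have hQc : Continuous Q := by
    apply Continuous.div continuous_const (by continuity)
    intro t; exact (denom_pos habs t).ne'
  have hgc : Continuous g := (hQc.sub continuous_const).abs
  have hQint : ∀ a b : ℝ, IntervalIntegrable Q MeasureTheory.volume a b :=
    fun a b => hQc.intervalIntegrable a b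
  have hgint : ∀ a b : ℝ, IntervalIntegrable g MeasureTheory.volume a b :=
    fun a b => hgc.intervalIntegrable a b
  -- sign facts
  have hsign_pos : ∀ t : ℝ, 0 ≤ Real.cos t → g t = Q t - c₀ := by
    intro t hct
    apply _root_.abs_of_nonneg
    rw [hQ, hc₀, sub_nonneg]
    apply div_le_div_of_nonneg_left (by nlinarith) (denom_pos habs t)
    nlinarith
  have hsign_neg : ∀ t : ℝ, Real.cos t ≤ 0 → g t = c₀ - Q t := by
    intro t hct
    have hgt : g t = |Q t - c₀| := rfl
    rw [hgt, abs_sub_comm]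
    apply _root_.abs_of_nonneg
    rw [hQ, hc₀, sub_nonneg]
    apply div_le_div_of_nonneg_left (by nlinarith) (by positivity)
    nlinarith [denom_pos habs t]
  -- split the interval
  have hsplit : (∫ t in (0:ℝ)..(2*π), g t)
      = (∫ t in (0:ℝ)..(π/2), g t) + (∫ t in (π/2:ℝ)..(3*π/2), g t)
        + (∫ t in (3*π/2:ℝ)..(2*π), g t) := by
    rw [intervalIntegral.integral_add_adjacent_intervals (hgint _ _) (hgint _ _),
      intervalIntegral.integral_add_adjacent_intervals (hgint _ _) (hgint _ _)]
  -- endpoint memberships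
  have hmem0 : (0:ℝ) ∈ Set.Icc (-(π/2)) (π/2) := by constructor <;> linarith
  have hmemp2 : (π/2:ℝ) ∈ Set.Icc (-(π/2)) (π/2) := by constructor <;> linarith
  have hmemm2 : (-(π/2):ℝ) ∈ Set.Icc (-(π/2)) (π/2) := by constructor <;> linarith
  -- piece 1
  have hQ1 : (∫ t in (0:ℝ)..(π/2), Q t) = 2*Real.arctan ((1+r)/(1-r)) := by
    rw [hQ]
    rw [int_kernel habs hmem0 hmemp2, show π/2/2 = π/4 by ring, Real.tan_pi_div_four,
      show (0:ℝ)/2 = 0 by norm_num, Real.tan_zero, mul_one, mul_zero, Real.arctan_zero]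
    ring
  have hp1 : (∫ t in (0:ℝ)..(π/2), g t) = 2*Real.arctan ((1+r)/(1-r)) - (π/2) * c₀ := by
    have hcongr : ∀ t ∈ Set.uIcc (0:ℝ) (π/2), g t = Q t - c₀ := by
      intro t ht
      rw [Set.uIcc_of_le (by linarith)] at ht
      apply hsign_pos
      apply Real.cos_nonneg_of_mem_Icc
      constructor
      · linarith [ht.1]
      · exact ht.2
    rw [intervalIntegral.integral_congr hcongr,
      intervalIntegral.integral_sub (hQint _ _) (intervalIntegrable_const),
      intervalIntegral.integral_const, hQ1, smul_eq_mul]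
    ring
  -- piece 3
  have hQ3 : (∫ t in (3*π/2:ℝ)..(2*π), g t) = 2*Real.arctan ((1+r)/(1-r)) - (π/2) * c₀ := by
    have hshift : (∫ t in (3*π/2:ℝ)..(2*π), g t) = ∫ t in (-(π/2):ℝ)..(0:ℝ), g t := by
      have h2 := intervalIntegral.integral_comp_add_right (a := -(π/2)) (b := (0:ℝ)) g (2*π)
      rw [show -(π/2) + 2*π = 3*π/2 by ring, show (0:ℝ) + 2*π = 2*π by ring] at h2
      rw [← h2]
      apply intervalIntegral.integral_congr
      intro t _
      show |Q (t + 2*π) - c₀| = |Q t - c₀|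
      rw [hQ]
      simp only [Real.cos_add_two_pi]
    rw [hshift]
    have hcongr : ∀ t ∈ Set.uIcc (-(π/2):ℝ) (0:ℝ), g t = Q t - c₀ := by
      intro t ht
      rw [Set.uIcc_of_le (by linarith)] at ht
      apply hsign_pos
      apply Real.cos_nonneg_of_mem_Icc
      constructor
      · exact ht.1
      · linarith [ht.2]
    have hQv : (∫ t in (-(π/2):ℝ)..(0:ℝ), Q t) = 2*Real.arctan ((1+r)/(1-r)) := by
      rw [hQ, int_kernel habs hmemm2 hmem0, show (0:ℝ)/2 = 0 by norm_num, Real.tan_zero,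
        show -(π/2)/2 = -(π/4) by ring, Real.tan_neg, Real.tan_pi_div_four, mul_zero,
        Real.arctan_zero, mul_neg, mul_one, Real.arctan_neg]
      ring
    rw [intervalIntegral.integral_congr hcongr,
      intervalIntegral.integral_sub (hQint _ _) (intervalIntegrable_const),
      intervalIntegral.integral_const, hQv, smul_eq_mul]
    ring
  -- piece 2
  have hQ2 : (∫ t in (π/2:ℝ)..(3*π/2), g t) = π * c₀ - 4*Real.arctan ((1-r)/(1+r)) := by
    have hcongr : ∀ t ∈ Set.uIcc (π/2:ℝ) (3*π/2), g t = c₀ - Q t := by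
      intro t ht
      rw [Set.uIcc_of_le (by linarith)] at ht
      apply hsign_neg
      apply Real.cos_nonpos_of_pi_div_two_le_of_le ht.1
      linarith [ht.2]
    have hQv : (∫ t in (π/2:ℝ)..(3*π/2), Q t) = 4*Real.arctan ((1-r)/(1+r)) := by
      have hshift : (∫ t in (π/2:ℝ)..(3*π/2), Q t)
          = ∫ t in (-(π/2):ℝ)..(π/2:ℝ), (1-(-r)^2)/(1-2*(-r)*Real.cos t+(-r)^2) := by
        have h2 := intervalIntegral.integral_comp_add_right (a := -(π/2)) (b := (π/2:ℝ)) Q π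
        rw [show -(π/2) + π = π/2 by ring, show π/2 + π = 3*π/2 by ring] at h2
        rw [← h2]
        apply intervalIntegral.integral_congr
        intro t _
        show Q (t + π) = _
        rw [hQ]
        simp only [Real.cos_add_pi]
        ring_nf
      rw [hshift, int_kernel habs' hmemm2 hmemp2, show π/2/2 = π/4 by ring,
        show -(π/2)/2 = -(π/4) by ring, Real.tan_neg, Real.tan_pi_div_four,
        show 1 + -r = 1 - r by ring, show 1 - -r = 1 + r by ring, mul_one, mul_neg, mul_one,
        Real.arctan_neg]
      ring
    rw [intervalIntegral.integral_congr hcongr,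
      intervalIntegral.integral_sub (intervalIntegrable_const) (hQint _ _),
      intervalIntegral.integral_const, hQv, smul_eq_mul]
    ring
  rw [hsplit, hp1, hQ2, hQ3,
    arctan_add_pi_div_four hr0 hr1, arctan_sub_pi_div_four hr0 hr1]
  ring

lemma kernel_est (α : ℝ) (hα1 : -1 < α) (hα2 : α < 0) (w : ℂ)
    (hw : ‖w‖ < 1) :
    ‖(poissonKernelAlpha α w -
        (((1 - ‖w‖ ^ 2) ^ (α + 1) / (1 + ‖w‖ ^ 2) : ℝ) : ℂ))‖ ≤
      (1 - ‖w‖) ^ α *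
        |(1 - ‖w‖ ^ 2) / Complex.normSq (1 - w)
          - (1 - ‖w‖ ^ 2) / (1 + ‖w‖ ^ 2)|
        + ((1 - ‖w‖) ^ α - 1) := by
  set r := ‖w‖ with hr
  have hr0 : 0 ≤ r := norm_nonneg w
  have h1r : (0:ℝ) < 1 - r := by linarith
  have h1r2 : (0:ℝ) < 1 - r^2 := by nlinarith
  have h1pr2 : (0:ℝ) < 1 + r^2 := by positivity
  set ζ : ℂ := 1 - (starRingEnd ℂ) w with hζ
  have hwre : |w.re| ≤ r := Complex.abs_re_le_norm w
  have hζre : 0 < ζ.re := by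
    simp only [hζ, Complex.sub_re, Complex.one_re, Complex.conj_re]
    cases' abs_le.mp hwre with h1 h2; linarith
  have hζ0 : ζ ≠ 0 := by
    intro h; rw [h] at hζre; simp at hζre
  have hζslit : ζ ∈ Complex.slitPlane := Or.inl hζre
  have h1w : (1:ℂ) - w ≠ 0 := by
    intro h
    have : ‖(1 - w)‖ = 0 := by rw [h]; simp
    have h1 : (1:ℝ) ≤ ‖(1 - w)‖ + ‖w‖ := by
      have := norm_add_le (1 - w) w; simpa using this
    rw [this] at h1; linarith
  set N : ℝ := Complex.normSq (1 - w) with hN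
  have hNpos : 0 < N := Complex.normSq_pos.mpr h1w
  -- key factorization of the kernel denominator
  have hden : (1 - w) * ζ ^ ((α:ℂ) + 1) = (N:ℂ) * ζ ^ (α:ℂ) := by
    rw [Complex.cpow_add _ _ hζ0, Complex.cpow_one]
    have hconj : ζ = (starRingEnd ℂ) (1 - w) := by
      simp [hζ, map_sub]
    calc (1 - w) * (ζ ^ (α:ℂ) * ζ) = ((1 - w) * ζ) * ζ ^ (α:ℂ) := by ring
      _ = (N:ℂ) * ζ ^ (α:ℂ) := by
          rw [hconj, Complex.mul_conj]
  have hζα0 : ζ ^ (α:ℂ) ≠ 0 := by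
    simp [Complex.cpow_eq_zero_iff, hζ0]
  set q : ℂ := (((1-r^2)^α : ℝ) : ℂ) * (ζ ^ (α:ℂ))⁻¹ with hq
  have hPq : poissonKernelAlpha α w = q * (((1-r^2)/N : ℝ) : ℂ) := by
    rw [poissonKernelAlpha]
    rw [← hr, hden]
    have hnum : ((1-r^2) ^ (α+1) : ℝ) = (1-r^2)^α * (1-r^2) := by
      rw [Real.rpow_add h1r2, Real.rpow_one]
    rw [hnum, hq]
    push_cast
    field_simp
  have hcdec : ((((1 - r^2) ^ (α+1) / (1 + r^2)) : ℝ) : ℂ)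
      = (((1-r^2)^α : ℝ) : ℂ) * (((1-r^2)/(1+r^2) : ℝ) : ℂ) := by
    have : ((1-r^2) ^ (α+1) / (1+r^2) : ℝ) = (1-r^2)^α * ((1-r^2)/(1+r^2)) := by
      rw [Real.rpow_add h1r2, Real.rpow_one]; ring
    rw [this]; push_cast; ring
  -- decomposition
  have hdec : poissonKernelAlpha α w - ((((1 - r^2) ^ (α+1) / (1 + r^2)) : ℝ) : ℂ)
      = q * ((((1-r^2)/N : ℝ) : ℂ) - (((1-r^2)/(1+r^2) : ℝ) : ℂ))
        + (((1-r^2)/(1+r^2) : ℝ) : ℂ) * (q - (((1-r^2)^α : ℝ) : ℂ)) := by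
    rw [hPq, hcdec]; ring
  rw [hdec]
  have habsζ_le : ‖ζ‖ ≤ 1 + r := by
    have := norm_add_le (1:ℂ) (-(starRingEnd ℂ) w)
    simpa [hζ, sub_eq_add_neg] using this
  have habsζ_ge : 1 - r ≤ ‖ζ‖ := by
    have h1 : (1:ℝ) ≤ ‖ζ‖ + ‖((starRingEnd ℂ) w)‖ := by
      have := norm_add_le ζ ((starRingEnd ℂ) w)
      simpa [hζ] using this
    simp only [Complex.norm_conj] at h1
    linarith
  have habsζpos : 0 < ‖ζ‖ := by linarith
  -- |q| ≤ (1-r)^α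
  have hqabs : ‖q‖ ≤ (1-r)^α := by
    rw [hq, norm_mul, norm_inv, Complex.norm_real, Real.norm_eq_abs,
      _root_.abs_of_nonneg (le_of_lt (Real.rpow_pos_of_pos h1r2 α)),
      Complex.norm_cpow_real]
    have hsplit : (1-r^2)^α = (1-r)^α * (1+r)^α := by
      rw [show (1-r^2 : ℝ) = (1-r)*(1+r) by ring,
        Real.mul_rpow (le_of_lt h1r) (by linarith)]
    have h2 : (1+r)^α ≤ (‖ζ‖)^α :=
      Real.rpow_le_rpow_of_nonpos habsζpos habsζ_le (le_of_lt hα2)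
    have h3 : 0 < (‖ζ‖)^α := Real.rpow_pos_of_pos habsζpos α
    rw [hsplit]
    calc (1-r)^α * (1+r)^α * ((‖ζ‖)^α)⁻¹
        ≤ (1-r)^α * (‖ζ‖)^α * ((‖ζ‖)^α)⁻¹ := by
          apply mul_le_mul_of_nonneg_right _ (by positivity)
          exact mul_le_mul_of_nonneg_left h2 (le_of_lt (Real.rpow_pos_of_pos h1r α))
      _ = (1-r)^α := by field_simp
  -- |q - (1-r²)^α| bound
  have hζβ : (ζ ^ (α:ℂ))⁻¹ = ζ ^ ((-α : ℝ):ℂ) := by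
    rw [← Complex.cpow_neg]; norm_num
  have hqdiff : ‖(q - (((1-r^2)^α : ℝ) : ℂ))‖
      ≤ (1-r^2)^α * (1 - (1-r)^(-α)) := by
    have : q - (((1-r^2)^α : ℝ) : ℂ)
        = (((1-r^2)^α : ℝ) : ℂ) * (ζ ^ ((-α : ℝ):ℂ) - 1) := by
      rw [hq, hζβ]; ring
    rw [this, norm_mul, Complex.norm_real, Real.norm_eq_abs,
      _root_.abs_of_nonneg (le_of_lt (Real.rpow_pos_of_pos h1r2 α))]
    apply mul_le_mul_of_nonneg_left _ (le_of_lt (Real.rpow_pos_of_pos h1r2 α))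
    have hu : ‖(-(starRingEnd ℂ) w)‖ ≤ r := by
      simp [Complex.norm_conj, hr]
    have hζ1u : ζ = 1 + (-(starRingEnd ℂ) w) := by rw [hζ]; ring
    rw [hζ1u]
    exact abs_cpow_sub_one_le (by linarith) (by linarith) hu hw
  -- put it together
  have htri := norm_add_le
    (q * ((((1-r^2)/N : ℝ) : ℂ) - (((1-r^2)/(1+r^2) : ℝ) : ℂ)))
    ((((1-r^2)/(1+r^2) : ℝ) : ℂ) * (q - (((1-r^2)^α : ℝ) : ℂ)))
  refine htri.trans ?_
  have habs1 : ‖((((1-r^2)/N : ℝ) : ℂ) - (((1-r^2)/(1+r^2) : ℝ) : ℂ))‖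
      = |(1-r^2)/N - (1-r^2)/(1+r^2)| := by
    rw [← Complex.ofReal_sub, Complex.norm_real, Real.norm_eq_abs]
  have hterm1 : ‖(q * ((((1-r^2)/N : ℝ) : ℂ) - (((1-r^2)/(1+r^2) : ℝ) : ℂ)))‖
      ≤ (1-r)^α * |(1-r^2)/N - (1-r^2)/(1+r^2)| := by
    rw [norm_mul, habs1]
    exact mul_le_mul_of_nonneg_right hqabs (abs_nonneg _)
  have hterm2 : ‖((((1-r^2)/(1+r^2) : ℝ) : ℂ) * (q - (((1-r^2)^α : ℝ) : ℂ)))‖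
      ≤ (1-r)^α - 1 := by
    rw [norm_mul, Complex.norm_real, Real.norm_eq_abs, _root_.abs_of_nonneg (by positivity)]
    calc (1-r^2)/(1+r^2) * ‖(q - (((1-r^2)^α : ℝ) : ℂ))‖
        ≤ (1-r^2)/(1+r^2) * ((1-r^2)^α * (1 - (1-r)^(-α))) :=
          mul_le_mul_of_nonneg_left hqdiff (by positivity)
      _ = (1-r^2)/(1+r^2) * (1-r^2)^α * (1 - (1-r)^(-α)) := by ring
      _ ≤ (1-r)^α - 1 := alg_bound hr0 hw (le_of_lt hα1) (le_of_lt hα2)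
  linarith

lemma normSq_one_sub_exp (r s : ℝ) :
    Complex.normSq (1 - (r:ℂ) * Complex.exp ((s:ℂ)*Complex.I)) = 1 - 2*r*Real.cos s + r^2 := by
  rw [Complex.normSq_apply]
  simp [Complex.exp_ofReal_mul_I_re, Complex.exp_ofReal_mul_I_im, Complex.sub_re, Complex.sub_im,
    Complex.mul_re, Complex.mul_im, Complex.ofReal_re, Complex.ofReal_im]
  nlinarith [Real.sin_sq_add_cos_sq s]

lemma kernel_at_zero (α : ℝ) : poissonKernelAlpha α 0 = 1 := by
  rw [poissonKernelAlpha]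
  simp [Real.one_rpow, Complex.one_cpow]

lemma abs_w_eq (z : ℂ) (t : ℝ) :
    ‖(z * Complex.exp (-Complex.I * t))‖ = ‖z‖ := by
  rw [norm_mul, Complex.norm_exp]
  have : (-Complex.I * (t:ℂ)).re = 0 := by simp
  rw [this, Real.exp_zero, mul_one]

lemma re_pos_one_sub_conj {w : ℂ} (hw : ‖w‖ < 1) :
    0 < (1 - (starRingEnd ℂ) w).re := by
  simp only [Complex.sub_re, Complex.one_re, Complex.conj_re]
  have := Complex.abs_re_le_norm w
  cases' abs_le.mp this with h1 h2
  linarith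

lemma one_sub_ne {w : ℂ} (hw : ‖w‖ < 1) : (1:ℂ) - w ≠ 0 := by
  intro h
  have h0 : ‖(1 - w)‖ = 0 := by rw [h]; simp
  have h1 : (1:ℝ) ≤ ‖(1 - w)‖ + ‖w‖ := by
    have := norm_add_le (1 - w) w; simpa using this
  rw [h0] at h1; linarith

lemma kernel_continuous (α : ℝ) (z : ℂ) (hz : ‖z‖ < 1) :
    Continuous (fun t : ℝ => poissonKernelAlpha α (z * Complex.exp (-Complex.I * t))) := by
  have hbase : Continuous (fun t : ℝ => (1:ℂ) - (starRingEnd ℂ) (z * Complex.exp (-Complex.I * t))) :=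
    continuous_const.sub (Complex.continuous_conj.comp
      (continuous_const.mul (Complex.continuous_exp.comp (by fun_prop))))
  have hwabs : ∀ t : ℝ, ‖(z * Complex.exp (-Complex.I * t))‖ < 1 := by
    intro t; rw [abs_w_eq]; exact hz
  have hcpow : Continuous (fun t : ℝ =>
      ((1:ℂ) - (starRingEnd ℂ) (z * Complex.exp (-Complex.I * t))) ^ ((α:ℂ)+1)) := by
    rw [continuous_iff_continuousAt]
    intro t
    have hslit : ((1:ℂ) - (starRingEnd ℂ) (z * Complex.exp (-Complex.I * t))) ∈ Complex.slitPlane :=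
      Or.inl (re_pos_one_sub_conj (hwabs t))
    exact ContinuousAt.comp (x := t) (g := fun w : ℂ => w ^ ((α:ℂ)+1))
      (f := fun t : ℝ => (1:ℂ) - (starRingEnd ℂ) (z * Complex.exp (-Complex.I * t)))
      (continuousAt_cpow_const hslit) hbase.continuousAt
  have hnum : Continuous (fun t : ℝ =>
      (((1 - ‖(z * Complex.exp (-Complex.I * t))‖ ^ 2) ^ (α + 1) : ℝ) : ℂ)) := by
    have : (fun t : ℝ => (((1 - ‖(z * Complex.exp (-Complex.I * t))‖ ^ 2) ^ (α + 1) : ℝ) : ℂ))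
        = fun t : ℝ => (((1 - ‖z‖ ^ 2) ^ (α + 1) : ℝ) : ℂ) := by
      funext t; rw [abs_w_eq]
    rw [this]; exact continuous_const
  have hden : Continuous (fun t : ℝ =>
      ((1:ℂ) - z * Complex.exp (-Complex.I * t)) *
        ((1:ℂ) - (starRingEnd ℂ) (z * Complex.exp (-Complex.I * t))) ^ ((α:ℂ)+1)) := by
    apply Continuous.mul _ hcpow
    fun_prop
  apply hnum.div hden
  intro t
  apply mul_ne_zero (one_sub_ne (hwabs t))
  have hne : ((1:ℂ) - (starRingEnd ℂ) (z * Complex.exp (-Complex.I * t))) ≠ 0 := by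
    intro h0
    have hre := re_pos_one_sub_conj (hwabs t)
    rw [h0] at hre; simp at hre
  rw [Ne, Complex.cpow_eq_zero_iff]
  rintro ⟨h0, _⟩
  exact hne h0


end SchwarzAux
set_option maxHeartbeats 1000000 in
/-- Schwarz-type lemma for `-1 < α < 0`: for `f = P_α[f*]` with `|f*| ≤ 1`,
`|f(z) - ((1-|z|²)^{α+1}/(1+|z|²)) f(0)| ≤ (4/π)(1-|z|)^α arctan|z| + ((1-|z|)^α - 1)`. -/
theorem schwarz_alpha_neg (α : ℝ) (hα1 : -1 < α) (hα2 : α < 0) (fs : ℝ → ℂ)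
    (hcont : Continuous fs) (hper : Function.Periodic fs (2 * Real.pi))
    (hbd : ∀ t : ℝ, ‖(fs t)‖ ≤ 1) :
    ∀ z ∈ Metric.ball (0 : ℂ) 1,
      ‖(poissonExt α fs z -
          ((((1 - ‖z‖ ^ 2) ^ (α + 1) / (1 + ‖z‖ ^ 2) : ℝ)) : ℂ) *
            poissonExt α fs 0)‖ ≤
        4 / Real.pi * (1 - ‖z‖) ^ α * Real.arctan (‖z‖) +
          ((1 - ‖z‖) ^ α - 1) := by
  intro z hz
  have hpi := Real.pi_pos
  rw [Metric.mem_ball, dist_zero_right] at hz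
  set r : ℝ := ‖z‖ with hr
  have hr0 : 0 ≤ r := norm_nonneg z
  have h1r : (0:ℝ) < 1 - r := by linarith
  set θ : ℝ := Complex.arg z with hθ
  set cR : ℝ := (1 - r^2) ^ (α+1) / (1 + r^2) with hcR
  set K : ℝ → ℂ := fun t => poissonKernelAlpha α (z * Complex.exp (-Complex.I * t)) with hK
  have hKc : Continuous K := kernel_continuous α z hz
  -- value at 0
  have hext0 : poissonExt α fs 0 = (1 / (2 * π) : ℂ) * ∫ t in (0:ℝ)..(2*π), fs t := by
    rw [poissonExt]
    congr 1
    apply intervalIntegral.integral_congr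
    intro t _
    show poissonKernelAlpha α (0 * Complex.exp (-Complex.I * t)) * fs t = fs t
    rw [zero_mul, kernel_at_zero, one_mul]
  -- rewrite difference as single integral
  have hdiff : poissonExt α fs z - (cR:ℂ) * poissonExt α fs 0
      = (1 / (2 * π) : ℂ) * ∫ t in (0:ℝ)..(2*π), (K t - (cR:ℂ)) * fs t := by
    rw [poissonExt, hext0]
    rw [show (cR:ℂ) * ((1 / (2 * π) : ℂ) * ∫ t in (0:ℝ)..(2*π), fs t)
        = (1 / (2 * π) : ℂ) * ((cR:ℂ) * ∫ t in (0:ℝ)..(2*π), fs t) by ring]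
    rw [← mul_sub]
    congr 1
    rw [← intervalIntegral.integral_const_mul]
    rw [← intervalIntegral.integral_sub (f := fun t => K t * fs t)
      (g := fun t => (cR:ℂ) * fs t) ((hKc.mul hcont).intervalIntegrable _ _)
      ((continuous_const.mul hcont).intervalIntegrable _ _)]
    apply intervalIntegral.integral_congr
    intro t _
    ring
  rw [hdiff]
  -- bound
  set c₀ : ℝ := (1-r^2)/(1+r^2) with hc₀
  set g : ℝ → ℝ := fun s => |(1-r^2)/(1-2*r*Real.cos s+r^2) - c₀| with hgdef
  set h : ℝ → ℝ := fun t => (1-r)^α * g (θ - t) + ((1-r)^α - 1) with hhdef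
  have habsr : |r| < 1 := by rwa [_root_.abs_of_nonneg hr0]
  have hgc : Continuous g := by
    apply Continuous.abs
    apply Continuous.sub _ continuous_const
    apply Continuous.div continuous_const (by continuity)
    intro t; exact (denom_pos habsr t).ne'
  have hhc : Continuous h := by
    apply Continuous.add _ continuous_const
    exact continuous_const.mul (hgc.comp (continuous_const.sub continuous_id))
  -- pointwise bound
  have hpt : ∀ t ∈ Set.uIoc (0:ℝ) (2*π), ‖(K t - (cR:ℂ)) * fs t‖ ≤ h t := by
    intro t _
    set w : ℂ := z * Complex.exp (-Complex.I * t) with hw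
    have habsw : ‖w‖ = r := abs_w_eq z t
    have hw1 : ‖w‖ < 1 := by rw [habsw]; exact hz
    have hkest := kernel_est α hα1 hα2 w hw1
    rw [habsw] at hkest
    -- rewrite normSq
    have hwform : w = (r:ℂ) * Complex.exp (((θ - t : ℝ):ℂ) * Complex.I) := by
      conv_lhs => rw [hw, ← Complex.norm_mul_exp_arg_mul_I z]
      rw [← hr, ← hθ, mul_assoc, ← Complex.exp_add]
      congr 2
      push_cast
      ring
    have hnsq : Complex.normSq (1 - w) = 1 - 2*r*Real.cos (θ - t) + r^2 := by
      rw [hwform, normSq_one_sub_exp]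
    rw [hnsq] at hkest
    have hfs := hbd t
    calc ‖(K t - (cR:ℂ)) * fs t‖ = ‖(K t - (cR:ℂ))‖ * ‖(fs t)‖ := by
          rw [norm_mul]
      _ ≤ ‖(K t - (cR:ℂ))‖ * 1 :=
          mul_le_mul_of_nonneg_left hfs (norm_nonneg _)
      _ = ‖(K t - (cR:ℂ))‖ := mul_one _
      _ ≤ h t := by
          rw [hhdef, hgdef]
          have : (1-r^2)/(1-2*r*Real.cos (θ-t)+r^2) - c₀
              = (1-r^2)/(1-2*r*Real.cos (θ-t)+r^2) - (1-r^2)/(1+r^2) := by rw [hc₀]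
          simp only
          exact hkest
  have hbound := intervalIntegral.norm_integral_le_abs_of_norm_le
      (f := fun t => (K t - (cR:ℂ)) * fs t) (g := h) (a := 0) (b := 2*π)
      (μ := MeasureTheory.volume)
      (by
        filter_upwards [MeasureTheory.ae_restrict_mem measurableSet_uIoc] with t ht
        exact hpt t ht)
      (hhc.intervalIntegrable _ _)
  -- compute ∫ h
  have hgper : Function.Periodic g (2*π) := by
    intro s
    rw [hgdef]
    simp only [Real.cos_add_two_pi]
  have hshift : (∫ t in (0:ℝ)..(2*π), g (θ - t)) = ∫ t in (0:ℝ)..(2*π), g t := by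
    rw [intervalIntegral.integral_comp_sub_left g θ, sub_zero]
    have := hgper.intervalIntegral_add_eq (θ - 2*π) 0
    rw [show θ - 2*π + 2*π = θ by ring, zero_add] at this
    exact this
  have hgval : (∫ t in (0:ℝ)..(2*π), g (θ - t)) = 8 * Real.arctan r := by
    rw [hshift, hgdef]
    exact hethcote hr0 hz
  have hinth : (∫ t in (0:ℝ)..(2*π), h t)
      = (1-r)^α * (8 * Real.arctan r) + 2*π*((1-r)^α - 1) := by
    show (∫ t in (0:ℝ)..(2*π), ((1-r)^α * g (θ - t) + ((1-r)^α - 1)))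
      = (1-r)^α * (8 * Real.arctan r) + 2*π*((1-r)^α - 1)
    have hi1 : IntervalIntegrable (fun t : ℝ => (1-r)^α * g (θ - t))
        MeasureTheory.volume 0 (2*π) := by
      apply Continuous.intervalIntegrable
      exact continuous_const.mul (hgc.comp (continuous_const.sub continuous_id))
    rw [intervalIntegral.integral_add hi1 (intervalIntegrable_const)]
    rw [intervalIntegral.integral_const_mul, intervalIntegral.integral_const]
    rw [hgval]
    simp only [smul_eq_mul, sub_zero]
  -- final arithmetic
  have hhnn : (0:ℝ) ≤ (1-r)^α * (8 * Real.arctan r) + 2*π*((1-r)^α - 1) := by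
    have h1 : 0 ≤ Real.arctan r := by
      rw [← Real.arctan_zero]
      exact Real.arctan_strictMono.monotone hr0
    have h2 : 1 ≤ (1-r)^α :=
      Real.one_le_rpow_of_pos_of_le_one_of_nonpos h1r (by linarith) (le_of_lt hα2)
    have h3 : 0 ≤ (1-r)^α := by linarith
    nlinarith
  rw [norm_mul]
  have habs2π : ‖(1 / (2 * π) : ℂ)‖ = 1/(2*π) := by
    rw [show ((1 / (2 * π) : ℂ)) = ((1/(2*π) : ℝ) : ℂ) by push_cast; ring,
      Complex.norm_real, Real.norm_eq_abs, _root_.abs_of_nonneg (by positivity)]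
  rw [habs2π]
  calc 1/(2*π) * ‖(∫ t in (0:ℝ)..(2*π), (K t - (cR:ℂ)) * fs t)‖
      ≤ 1/(2*π) * |∫ t in (0:ℝ)..(2*π), h t| := by
        apply mul_le_mul_of_nonneg_left _ (by positivity)
        exact hbound
    _ = 1/(2*π) * ((1-r)^α * (8 * Real.arctan r) + 2*π*((1-r)^α - 1)) := by
        rw [hinth, _root_.abs_of_nonneg hhnn]
    _ = 4 / π * (1-r)^α * Real.arctan r + ((1-r)^α - 1) := by
        field_simp
        ring
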